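/- (Another expression of the optimistic general formulas.) For any general source X, any R ≥ 0, and any ε, δ ∈ [0,1) satisfying ε + δ < 1, it holds that G*_{ε,δ}(X) = H̄*_{ε+δ}(X) and G*_{ε,δ}(R|X) = H̄*_{ε+δ}(R|X). -/

import Mathlib

open Filter MeasureTheory

namespace NY

/-- A probability distribution on a set, given by its point mass function. -/
structure Dist (α : Type*) where
  p : α → ℝ
  nonneg : ∀ x, 0 ≤ p x
  hasSum : HasSum p 1

/-- The probability of a set under a distribution. -/
noncomputable def Dist.pr {α : Type*} (P : Dist α) (A : Set α) : ℝ := ∑' x : A, P.p x.1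

/-- 𝒰* : nonempty finite strings over the code alphabet 𝒰 = {1,…,K}. -/
abbrev Word (K : ℕ) := {u : List (Fin K) // u ≠ []}

/-- Length of a string, as a real number. -/
noncomputable def wlen {K : ℕ} (u : Word K) : ℝ := u.1.length

/-- Error probability of a variable-length code (φ, ψ). -/
noncomputable def errP {α : Type*} {K : ℕ} (P : Dist α) (φ : α → Word K) (ψ : Word K → α) : ℝ :=
  P.pr {x | ψ (φ x) ≠ x}

/-- Overflow probability of an encoder φ with threshold η. -/
noncomputable def ovP {α : Type*} {K : ℕ} (P : Dist α) (φ : α → Word K) (η : ℝ) : ℝ :=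
  P.pr {x | wlen (φ x) > η}

/-- A general source: for each blocklength n, a distribution on 𝒳^n. -/
abbrev Source (𝒳 : Type*) := (n : ℕ) → Dist (Fin n → 𝒳)

/-- The limit as ν ↓ 0 of a function g which is nonincreasing in ν
(the limit exists by monotonicity and equals the supremum over ν > 0). -/
noncomputable def limNu (g : ℝ → ℝ) : ℝ := sSup (g '' Set.Ioi (0 : ℝ))

variable {𝒳 : Type*}

/-- A rate R ≥ 0 is (ε,δ)-achievable. -/
def FirstAch (K : ℕ) (X : Source 𝒳) (ε δ R : ℝ) : Prop :=
  0 ≤ R ∧ ∃ (φ : ∀ n, (Fin n → 𝒳) → Word K) (ψ : ∀ n, Word K → (Fin n → 𝒳)),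
    limsup (fun n => errP (X n) (φ n) (ψ n)) atTop ≤ ε ∧
    limsup (fun n => ovP (X n) (φ n) ((n : ℝ) * R)) atTop ≤ δ

/-- The first-order (ε,δ)-optimum threshold R(ε,δ|X). -/
noncomputable def Ropt (K : ℕ) (X : Source 𝒳) (ε δ : ℝ) : ℝ :=
  sInf {R | FirstAch K X ε δ R}

/-- L is (ε,δ,R)-achievable (second order). -/
def SecondAch (K : ℕ) (X : Source 𝒳) (ε δ R L : ℝ) : Prop :=
  ∃ (φ : ∀ n, (Fin n → 𝒳) → Word K) (ψ : ∀ n, Word K → (Fin n → 𝒳)),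
    limsup (fun n => errP (X n) (φ n) (ψ n)) atTop ≤ ε ∧
    limsup (fun n => ovP (X n) (φ n) ((n : ℝ) * R + Real.sqrt (n : ℝ) * L)) atTop ≤ δ

/-- The second-order (ε,δ,R)-optimum threshold L(ε,δ,R|X). -/
noncomputable def Lopt (K : ℕ) (X : Source 𝒳) (ε δ R : ℝ) : ℝ :=
  sInf {L | SecondAch K X ε δ R L}

/-- A rate R ≥ 0 is optimistically (ε,δ)-achievable. -/
def OptFirstAch (K : ℕ) (X : Source 𝒳) (ε δ R : ℝ) : Prop :=
  0 ≤ R ∧ ∃ (φ : ∀ n, (Fin n → 𝒳) → Word K) (ψ : ∀ n, Word K → (Fin n → 𝒳)),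
    ∀ γ > (0 : ℝ), ∃ ns : ℕ → ℕ, StrictMono ns ∧ ∀ i,
      errP (X (ns i)) (φ (ns i)) (ψ (ns i)) ≤ ε + γ ∧
      ovP (X (ns i)) (φ (ns i)) ((ns i : ℝ) * R) ≤ δ + γ

/-- The optimistic first-order (ε,δ)-optimum threshold R*(ε,δ|X). -/
noncomputable def RoptStar (K : ℕ) (X : Source 𝒳) (ε δ : ℝ) : ℝ :=
  sInf {R | OptFirstAch K X ε δ R}

/-- L is optimistically (ε,δ,R)-achievable. -/
def OptSecondAch (K : ℕ) (X : Source 𝒳) (ε δ R L : ℝ) : Prop :=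
  ∃ (φ : ∀ n, (Fin n → 𝒳) → Word K) (ψ : ∀ n, Word K → (Fin n → 𝒳)),
    ∀ γ > (0 : ℝ), ∃ ns : ℕ → ℕ, StrictMono ns ∧ ∀ i,
      errP (X (ns i)) (φ (ns i)) (ψ (ns i)) ≤ ε + γ ∧
      ovP (X (ns i)) (φ (ns i)) ((ns i : ℝ) * R + Real.sqrt (ns i : ℝ) * L) ≤ δ + γ

/-- The optimistic second-order (ε,δ,R)-optimum threshold L*(ε,δ,R|X). -/
noncomputable def LoptStar (K : ℕ) (X : Source 𝒳) (ε δ R : ℝ) : ℝ :=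
  sInf {L | OptSecondAch K X ε δ R L}

/-- A rate R ≥ 0 is type I (ε,δ)-achievable. -/
def TypeIAch (K : ℕ) (X : Source 𝒳) (ε δ R : ℝ) : Prop :=
  0 ≤ R ∧ ∃ (φ : ∀ n, (Fin n → 𝒳) → Word K) (ψ : ∀ n, Word K → (Fin n → 𝒳)),
    limsup (fun n => errP (X n) (φ n) (ψ n)) atTop ≤ ε ∧
    liminf (fun n => ovP (X n) (φ n) ((n : ℝ) * R)) atTop ≤ δ

/-- R†(ε,δ|X). -/
noncomputable def Rdagger (K : ℕ) (X : Source 𝒳) (ε δ : ℝ) : ℝ :=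
  sInf {R | TypeIAch K X ε δ R}

/-- A rate R ≥ 0 is type II (ε,δ)-achievable. -/
def TypeIIAch (K : ℕ) (X : Source 𝒳) (ε δ R : ℝ) : Prop :=
  0 ≤ R ∧ ∃ (φ : ∀ n, (Fin n → 𝒳) → Word K) (ψ : ∀ n, Word K → (Fin n → 𝒳)),
    liminf (fun n => errP (X n) (φ n) (ψ n)) atTop ≤ ε ∧
    limsup (fun n => ovP (X n) (φ n) ((n : ℝ) * R)) atTop ≤ δ

/-- R‡(ε,δ|X). -/
noncomputable def Rddagger (K : ℕ) (X : Source 𝒳) (ε δ : ℝ) : ℝ :=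
  sInf {R | TypeIIAch K X ε δ R}

/-- H̄_γ(X) := inf{ R : limsup_n Pr{ (1/n) log(1/P_{X^n}(X^n)) > R } ≤ γ }. -/
noncomputable def Hbar (K : ℕ) (X : Source 𝒳) (γ : ℝ) : ℝ :=
  sInf {R | limsup (fun n =>
    (X n).pr {x | Real.logb (K : ℝ) (1 / (X n).p x) / (n : ℝ) > R}) atTop ≤ γ}

/-- H̄*_γ(X) (optimistic version, with liminf). -/
noncomputable def HbarStar (K : ℕ) (X : Source 𝒳) (γ : ℝ) : ℝ :=
  sInf {R | liminf (fun n =>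
    (X n).pr {x | Real.logb (K : ℝ) (1 / (X n).p x) / (n : ℝ) > R}) atTop ≤ γ}

/-- H̄_γ(R|X) := inf{ L : limsup_n Pr{ (1/n) log(1/P_{X^n}(X^n)) > R + L/√n } ≤ γ }. -/
noncomputable def Hbar2 (K : ℕ) (X : Source 𝒳) (γ R : ℝ) : ℝ :=
  sInf {L | limsup (fun n =>
    (X n).pr {x | Real.logb (K : ℝ) (1 / (X n).p x) / (n : ℝ)
      > R + L / Real.sqrt (n : ℝ)}) atTop ≤ γ}

/-- H̄*_γ(R|X) (optimistic version, with liminf). -/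
noncomputable def Hbar2Star (K : ℕ) (X : Source 𝒳) (γ R : ℝ) : ℝ :=
  sInf {L | liminf (fun n =>
    (X n).pr {x | Real.logb (K : ℝ) (1 / (X n).p x) / (n : ℝ)
      > R + L / Real.sqrt (n : ℝ)}) atTop ≤ γ}

/-- F(ε,R) := limsup_n inf_{A : Pr(A) ≥ 1−ε} Pr{ −(1/n) log P_{X^n}(X^n) ≥ R, X^n ∈ A }. -/
noncomputable def Fspec (K : ℕ) (X : Source 𝒳) (ε R : ℝ) : ℝ :=
  limsup (fun n =>
    sInf ((fun A : Set (Fin n → 𝒳) =>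
        (X n).pr (A ∩ {x | -Real.logb (K : ℝ) ((X n).p x) / (n : ℝ) ≥ R})) ''
      {A | (X n).pr A ≥ 1 - ε})) atTop

/-- H̃_{ε,δ}(X) := inf{ R : F(ε,R) ≤ δ }. -/
noncomputable def Htilde (K : ℕ) (X : Source 𝒳) (ε δ : ℝ) : ℝ :=
  sInf {R | Fspec K X ε R ≤ δ}

/-- G_{ε,δ}(X). -/
noncomputable def Gfirst (K : ℕ) (X : Source 𝒳) (ε δ : ℝ) : ℝ :=
  sInf {R | limNu (fun ν => limsup (fun n =>
    sInf ((fun A : Set (Fin n → 𝒳) =>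
        (X n).pr (A ∩ {x | -Real.logb (K : ℝ) ((X n).p x / (X n).pr A) / (n : ℝ) ≥ R})) ''
      {A | (X n).pr A ≥ 1 - ε - ν})) atTop) ≤ δ}

/-- G*_{ε,δ}(X) (optimistic version, with liminf). -/
noncomputable def GfirstStar (K : ℕ) (X : Source 𝒳) (ε δ : ℝ) : ℝ :=
  sInf {R | limNu (fun ν => liminf (fun n =>
    sInf ((fun A : Set (Fin n → 𝒳) =>
        (X n).pr (A ∩ {x | -Real.logb (K : ℝ) ((X n).p x / (X n).pr A) / (n : ℝ) ≥ R})) ''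
      {A | (X n).pr A ≥ 1 - ε - ν})) atTop) ≤ δ}

/-- G_{ε,δ}(R|X). -/
noncomputable def Gsecond (K : ℕ) (X : Source 𝒳) (ε δ R : ℝ) : ℝ :=
  sInf {L | limNu (fun ν => limsup (fun n =>
    sInf ((fun A : Set (Fin n → 𝒳) =>
        (X n).pr (A ∩ {x | -Real.logb (K : ℝ) ((X n).p x / (X n).pr A) / (n : ℝ)
          ≥ R + L / Real.sqrt (n : ℝ)})) ''
      {A | (X n).pr A ≥ 1 - ε - ν})) atTop) ≤ δ}

/-- G*_{ε,δ}(R|X) (optimistic version, with liminf). -/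
noncomputable def GsecondStar (K : ℕ) (X : Source 𝒳) (ε δ R : ℝ) : ℝ :=
  sInf {L | limNu (fun ν => liminf (fun n =>
    sInf ((fun A : Set (Fin n → 𝒳) =>
        (X n).pr (A ∩ {x | -Real.logb (K : ℝ) ((X n).p x / (X n).pr A) / (n : ℝ)
          ≥ R + L / Real.sqrt (n : ℝ)})) ''
      {A | (X n).pr A ≥ 1 - ε - ν})) atTop) ≤ δ}

/-- A rate R is optimistically ε-achievable by fixed-length codes. -/
def FixAchR (K : ℕ) (X : Source 𝒳) (ε R : ℝ) : Prop :=
  ∃ (M : ℕ → ℕ) (φ : ∀ n, (Fin n → 𝒳) → Fin (M n)) (ψ : ∀ n, Fin (M n) → (Fin n → 𝒳)),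
    ∀ γ > (0 : ℝ), ∃ ns : ℕ → ℕ, StrictMono ns ∧ ∀ i,
      (X (ns i)).pr {x | ψ (ns i) (φ (ns i) x) ≠ x} ≤ ε + γ ∧
      Real.logb (K : ℝ) (M (ns i) : ℝ) / (ns i : ℝ) ≤ R + γ

/-- R^f(ε|X). -/
noncomputable def Rfix (K : ℕ) (X : Source 𝒳) (ε : ℝ) : ℝ :=
  sInf {R | FixAchR K X ε R}

/-- A real L is optimistically (ε,R)-achievable by fixed-length codes. -/
def FixAchL (K : ℕ) (X : Source 𝒳) (ε R L : ℝ) : Prop :=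
  ∃ (M : ℕ → ℕ) (φ : ∀ n, (Fin n → 𝒳) → Fin (M n)) (ψ : ∀ n, Fin (M n) → (Fin n → 𝒳)),
    ∀ γ > (0 : ℝ), ∃ ns : ℕ → ℕ, StrictMono ns ∧ ∀ i,
      (X (ns i)).pr {x | ψ (ns i) (φ (ns i) x) ≠ x} ≤ ε + γ ∧
      Real.logb (K : ℝ) ((M (ns i) : ℝ) / (K : ℝ) ^ ((ns i : ℝ) * R)) / Real.sqrt (ns i : ℝ)
        ≤ L + γ

/-- L^f(ε,R|X). -/
noncomputable def Lfix (K : ℕ) (X : Source 𝒳) (ε R : ℝ) : ℝ :=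
  sInf {L | FixAchL K X ε R L}

namespace Dist
variable {α : Type*} (P : Dist α)

lemma summable : Summable P.p := P.hasSum.summable

lemma summable_ind (A : Set α) : Summable (A.indicator P.p) := P.summable.indicator A

lemma pr_eq_tsum_ind (A : Set α) : P.pr A = ∑' x, A.indicator P.p x := tsum_subtype A P.p

lemma pr_nonneg (A : Set α) : 0 ≤ P.pr A := tsum_nonneg fun x => P.nonneg _

lemma pr_empty : P.pr (∅ : Set α) = 0 := by
  rw [Dist.pr]; exact tsum_empty

lemma pr_mono {A B : Set α} (h : A ⊆ B) : P.pr A ≤ P.pr B := by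
  rw [P.pr_eq_tsum_ind, P.pr_eq_tsum_ind]
  exact Summable.tsum_le_tsum
    (fun x => Set.indicator_le_indicator_of_subset h (fun a => P.nonneg a) x)
    (P.summable_ind A) (P.summable_ind B)

lemma pr_univ : P.pr Set.univ = 1 := by
  rw [Dist.pr, tsum_univ]; exact P.hasSum.tsum_eq

lemma pr_le_one (A : Set α) : P.pr A ≤ 1 := by
  rw [← P.pr_univ]; exact P.pr_mono (Set.subset_univ A)

lemma le_pr {x : α} {A : Set α} (hx : x ∈ A) : P.p x ≤ P.pr A :=
  Summable.le_tsum (P.summable.subtype A) (⟨x, hx⟩ : A) (fun j _ => P.nonneg _)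

lemma p_le_one (x : α) : P.p x ≤ 1 := by
  have := P.le_pr (Set.mem_univ x); rwa [P.pr_univ] at this

lemma pr_union_disjoint {A B : Set α} (h : Disjoint A B) :
    P.pr (A ∪ B) = P.pr A + P.pr B := by
  rw [P.pr_eq_tsum_ind, P.pr_eq_tsum_ind, P.pr_eq_tsum_ind,
    Set.indicator_union_of_disjoint h]
  exact Summable.tsum_add (P.summable_ind A) (P.summable_ind B)

lemma pr_compl (A : Set α) : P.pr Aᶜ = 1 - P.pr A := by
  have h : P.pr (A ∪ Aᶜ) = P.pr A + P.pr Aᶜ :=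
    P.pr_union_disjoint disjoint_compl_right
  rw [Set.union_compl_self, P.pr_univ] at h
  linarith

lemma pr_diff {C E : Set α} (h : C ⊆ E) : P.pr (E \ C) = P.pr E - P.pr C := by
  have h1 : P.pr (C ∪ E \ C) = P.pr C + P.pr (E \ C) :=
    P.pr_union_disjoint (disjoint_sdiff_self_right)
  rw [Set.union_diff_cancel h] at h1
  linarith

lemma pr_inter_ge (T A : Set α) : P.pr T - P.pr Aᶜ ≤ P.pr (T ∩ A) := by
  have h1 : T ⊆ (T ∩ A) ∪ Aᶜ := by
    intro x hx
    by_cases hA : x ∈ A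
    · exact Or.inl ⟨hx, hA⟩
    · exact Or.inr hA
  have h2 : P.pr T ≤ P.pr ((T ∩ A) ∪ Aᶜ) := P.pr_mono h1
  have h3 : P.pr ((T ∩ A) ∪ Aᶜ) ≤ P.pr (T ∩ A) + P.pr Aᶜ := by
    rw [P.pr_eq_tsum_ind, P.pr_eq_tsum_ind, P.pr_eq_tsum_ind, ← Summable.tsum_add (P.summable_ind _) (P.summable_ind _)]
    refine Summable.tsum_le_tsum (fun x => ?_) (P.summable_ind _)
      ((P.summable_ind _).add (P.summable_ind _))
    by_cases hx : x ∈ (T ∩ A) ∪ Aᶜ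
    · rcases hx with hx | hx
      · rw [Set.indicator_of_mem (Set.mem_union_left _ hx), Set.indicator_of_mem hx]
        exact le_add_of_le_of_nonneg le_rfl (Set.indicator_nonneg (fun a _ => P.nonneg a) x)
      · rw [Set.indicator_of_mem (Set.mem_union_right _ hx), Set.indicator_of_mem hx]
        exact le_add_of_nonneg_left (Set.indicator_nonneg (fun a _ => P.nonneg a) x)
    · rw [Set.indicator_of_notMem hx]
      exact add_nonneg (Set.indicator_nonneg (fun a _ => P.nonneg a) x)
        (Set.indicator_nonneg (fun a _ => P.nonneg a) x)
  linarith

lemma pr_congr_supp {A B : Set α} (h : ∀ x, P.p x ≠ 0 → (x ∈ A ↔ x ∈ B)) :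
    P.pr A = P.pr B := by
  rw [P.pr_eq_tsum_ind, P.pr_eq_tsum_ind]
  congr 1
  funext x
  by_cases hx : P.p x = 0
  · by_cases hA : x ∈ A <;> by_cases hB : x ∈ B <;>
      simp [Set.indicator, hA, hB, hx]
  · have := h x hx
    by_cases hA : x ∈ A
    · rw [Set.indicator_of_mem hA, Set.indicator_of_mem (this.1 hA)]
    · rw [Set.indicator_of_notMem hA, Set.indicator_of_notMem (fun hB => hA (this.2 hB))]

end Dist
section Greedy

lemma greedy_nat (q : ℕ → ℝ) (h0 : ∀ k, 0 ≤ q k) (hs : Summable q) {a t : ℝ}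
    (ha : ∀ k, q k ≤ a) (ht : 0 ≤ t) :
    ∃ S : Set ℕ, (∑' k : S, q k) ≤ t ∧ (t - a ≤ (∑' k : S, q k) ∨ S = Set.univ) := by
  classical
  let s : ℕ → ℝ := fun m => Nat.rec 0 (fun k sk => sk + if sk + q k ≤ t then q k else 0) m
  set S : Set ℕ := {k | s k + q k ≤ t} with hS
  have hstep : ∀ m, s (m+1) = s m + if s m + q m ≤ t then q m else 0 := fun m => rfl
  have hind : ∀ m, s m = ∑ k ∈ Finset.range m, S.indicator q k := by
    intro m; induction m with
    | zero => simp [s]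
    | succ m ih =>
      rw [Finset.sum_range_succ, ← ih, hstep]
      by_cases h : s m + q m ≤ t
      · rw [if_pos h, Set.indicator_of_mem (show m ∈ S from h)]
      · rw [if_neg h, Set.indicator_of_notMem (show m ∉ S from h)]
  have hsle : ∀ m, s m ≤ t := by
    intro m; induction m with
    | zero => exact ht
    | succ m ih =>
      rw [hstep]
      split_ifs with h
      · linarith
      · simpa
  have hsum_ind : Summable (S.indicator q) := hs.indicator S
  have htsum : (∑' k : S, q k) = ∑' k, S.indicator q k := tsum_subtype S q
  have hub : (∑' k : S, q k) ≤ t := by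
    rw [htsum]
    refine Summable.tsum_le_of_sum_le hsum_ind fun F => ?_
    obtain ⟨m, hm⟩ := F.exists_nat_subset_range
    calc ∑ k ∈ F, S.indicator q k ≤ ∑ k ∈ Finset.range m, S.indicator q k :=
          Finset.sum_le_sum_of_subset_of_nonneg hm
            (fun i _ _ => Set.indicator_nonneg (fun j _ => h0 j) i)
      _ = s m := (hind m).symm
      _ ≤ t := hsle m
  refine ⟨S, hub, ?_⟩
  by_cases hSu : S = Set.univ
  · exact Or.inr hSu
  · left
    obtain ⟨k, hk⟩ : ∃ k, k ∉ S := by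
      by_contra h; push_neg at h; exact hSu (Set.eq_univ_of_forall h)
    have h1 : t < s k + q k := lt_of_not_ge hk
    have h2 : s k ≤ ∑' j, S.indicator q j := by
      rw [hind k]
      exact Summable.sum_le_tsum _ (fun i _ => Set.indicator_nonneg (fun j _ => h0 j) i) hsum_ind
    rw [htsum]
    have := ha k; linarith

lemma greedy_set {α : Type*} [Countable α] (P : Dist α) (E : Set α) {a t : ℝ}
    (ha0 : 0 ≤ a) (ha : ∀ x ∈ E, P.p x ≤ a) (ht : 0 ≤ t) :
    ∃ C : Set α, C ⊆ E ∧ P.pr C ≤ t ∧ (t - a ≤ P.pr C ∨ C = E) := by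
  classical
  obtain ⟨f, hf⟩ := Countable.exists_injective_nat α
  set ι : E → ℕ := fun x => f x.1 with hι
  have hinj : Function.Injective ι := fun x y h => Subtype.ext (hf h)
  set q : ℕ → ℝ := Function.extend ι (fun x : E => P.p x.1) 0 with hq
  have hq_apply : ∀ x : E, q (ι x) = P.p x.1 := fun x => hinj.extend_apply _ _ x
  have hq_off : ∀ k ∉ Set.range ι, q k = 0 := fun k hk => Function.extend_apply' _ _ _ hk
  have hq0 : ∀ k, 0 ≤ q k := by
    intro k
    by_cases hk : k ∈ Set.range ι
    · obtain ⟨x, rfl⟩ := hk; rw [hq_apply]; exact P.nonneg _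
    · rw [hq_off k hk]
  have hqa : ∀ k, q k ≤ a := by
    intro k
    by_cases hk : k ∈ Set.range ι
    · obtain ⟨x, rfl⟩ := hk; rw [hq_apply]; exact ha x.1 x.2
    · rw [hq_off k hk]; exact ha0
  have hqs : Summable q := by
    rw [hq]
    exact (summable_extend_zero hinj).2 (P.summable.subtype E)
  obtain ⟨S, hS1, hS2⟩ := greedy_nat q hq0 hqs hqa ht
  set C : Set α := {x | x ∈ E ∧ f x ∈ S} with hC
  have hCE : C ⊆ E := fun x hx => hx.1
  have key : P.pr C = ∑' k : S, q k := by
    have hg : Function.Injective (fun c : C => f c.1) := fun x y h => Subtype.ext (hf h)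
    have hsupp : Function.support (S.indicator q) ⊆ Set.range (fun c : C => f c.1) := by
      intro k hk
      have hkS : k ∈ S := by
        by_contra hkS; exact hk (Set.indicator_of_notMem hkS q)
      have hkq : q k ≠ 0 := by
        have h' := Function.mem_support.mp hk
        rwa [Set.indicator_of_mem hkS] at h'
      have hkr : k ∈ Set.range ι := by
        by_contra hr; exact hkq (hq_off k hr)
      obtain ⟨x, rfl⟩ := hkr
      exact ⟨⟨x.1, ⟨x.2, hkS⟩⟩, rfl⟩
    have h1 : ∑' c : C, S.indicator q (f c.1) = ∑' k, S.indicator q k :=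
      Function.Injective.tsum_eq hg hsupp
    have h2 : ∀ c : C, S.indicator q (f c.1) = P.p c.1 := by
      intro c
      rw [Set.indicator_of_mem c.2.2]
      exact hq_apply ⟨c.1, c.2.1⟩
    calc P.pr C = ∑' c : C, S.indicator q (f c.1) := (tsum_congr h2).symm
      _ = ∑' k, S.indicator q k := h1
      _ = ∑' k : S, q k := (tsum_subtype S q).symm
  refine ⟨C, hCE, key ▸ hS1, ?_⟩
  rcases hS2 with h | h
  · exact Or.inl (key ▸ h)
  · right
    ext x
    simp only [hC, Set.mem_setOf_eq, h, Set.mem_univ, and_true]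

end Greedy
section Helpers

lemma sInf_le_sInf_of_cl {S T : Set ℝ} (hST : ∀ x ∈ S, ∀ η > 0, x + η ∈ T)
    (hTS : ∀ x ∈ T, ∀ η > 0, x + η ∈ S) : sInf T ≤ sInf S := by
  rcases S.eq_empty_or_nonempty with hSe | hSne
  · have hTe : T = ∅ := by
      by_contra h
      obtain ⟨x, hx⟩ := Set.nonempty_iff_ne_empty.2 h
      have h2 := hTS x hx 1 one_pos
      rw [hSe] at h2; exact h2
    rw [hSe, hTe]
  · have hTne : T.Nonempty := by
      obtain ⟨x, hx⟩ := hSne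
      exact ⟨x + 1, hST x hx 1 one_pos⟩
    by_cases hbT : BddBelow T
    · refine le_csInf hSne fun x hx => ?_
      refine le_of_forall_pos_le_add fun η hη => ?_
      exact csInf_le hbT (hST x hx η hη)
    · have hbS : ¬ BddBelow S := by
        rintro ⟨b, hb⟩
        apply hbT
        refine ⟨b - 1, fun x hx => ?_⟩
        have h3 := hb (hTS x hx 1 one_pos)
        linarith
      rw [Real.sInf_of_not_bddBelow hbT, Real.sInf_of_not_bddBelow hbS]

lemma sInf_eq_sInf_of_cl {S T : Set ℝ} (hST : ∀ x ∈ S, ∀ η > 0, x + η ∈ T)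
    (hTS : ∀ x ∈ T, ∀ η > 0, x + η ∈ S) : sInf S = sInf T :=
  le_antisymm (sInf_le_sInf_of_cl hTS hST) (sInf_le_sInf_of_cl hST hTS)

lemma tendsto_sqrt_nat : Tendsto (fun n : ℕ => Real.sqrt n) atTop atTop := by
  refine tendsto_atTop.2 fun b => ?_
  filter_upwards [eventually_ge_atTop ⌈b^2⌉₊] with n hn
  have h1 : (b^2 : ℝ) ≤ n := le_trans (Nat.le_ceil _) (by exact_mod_cast hn)
  calc b ≤ |b| := le_abs_self b
    _ = Real.sqrt (b^2) := (Real.sqrt_sq_eq_abs b).symm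
    _ ≤ Real.sqrt n := Real.sqrt_le_sqrt h1

lemma logb_one_div_nonneg {α : Type*} {K : ℕ} (hK : 2 ≤ K) (P : Dist α) (x : α) :
    0 ≤ Real.logb K (1 / P.p x) := by
  have hK1 : (1:ℝ) < K := by exact_mod_cast hK
  rcases eq_or_lt_of_le (P.nonneg x) with h | h
  · rw [← h]; simp
  · exact Real.logb_nonneg hK1 (one_le_one_div h (P.p_le_one x))

lemma sInf_pr_nonneg {β : Type*} (P : Dist β) (F : Set β → Set β) (Scon : Set (Set β)) :
    0 ≤ sInf ((fun A => P.pr (A ∩ F A)) '' Scon) :=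
  Real.sInf_nonneg (by rintro y ⟨A, -, rfl⟩; exact P.pr_nonneg _)

lemma bddBelow_pr_image {β : Type*} (P : Dist β) (F : Set β → Set β) (Scon : Set (Set β)) :
    BddBelow ((fun A => P.pr (A ∩ F A)) '' Scon) :=
  ⟨0, by rintro y ⟨A, -, rfl⟩; exact P.pr_nonneg _⟩

lemma sInf_pr_le_one {β : Type*} (P : Dist β) (F : Set β → Set β) (Scon : Set (Set β))
    (h : Set.univ ∈ Scon) : sInf ((fun A => P.pr (A ∩ F A)) '' Scon) ≤ 1 :=
  csInf_le_of_le (bddBelow_pr_image P F Scon) (Set.mem_image_of_mem _ h) (P.pr_le_one _)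

lemma univ_mem_con {β : Type*} (P : Dist β) {ε ν : ℝ} (hε : 0 ≤ ε) (hν : 0 ≤ ν) :
    Set.univ ∈ {A : Set β | P.pr A ≥ 1 - ε - ν} := by
  have := P.pr_univ
  simp only [Set.mem_setOf_eq, this]
  linarith

end Helpers
section Direct
open Topology

lemma direct_lemma {𝒳 : Type*} [Countable 𝒳] {K : ℕ} (hK : 2 ≤ K) (X : Source 𝒳) {ε δ : ℝ}
    (hε0 : 0 ≤ ε) (hδ0 : 0 ≤ δ) {σ σ' : ℕ → ℝ}
    (hdiff : Tendsto (fun n => σ' n - σ n) atTop atTop)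
    (hσ' : Tendsto σ' atTop atTop)
    (hH : liminf (fun n => (X n).pr {x | Real.logb K (1 / (X n).p x) > σ n}) atTop ≤ ε + δ)
    {ν : ℝ} (hν : 0 < ν) :
    liminf (fun n => sInf ((fun A : Set (Fin n → 𝒳) =>
      (X n).pr (A ∩ {x | -Real.logb K ((X n).p x / (X n).pr A) ≥ σ' n})) ''
      {A | (X n).pr A ≥ 1 - ε - ν})) atTop ≤ δ := by
  have hK1 : (1:ℝ) < K := by exact_mod_cast hK
  have hK0 : (0:ℝ) < K := lt_trans one_pos hK1
  refine le_of_forall_pos_le_add fun γ hγ => ?_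
  have hcob : IsCoboundedUnder (· ≥ ·) atTop
      (fun n => (X n).pr {x | Real.logb K (1 / (X n).p x) > σ n}) :=
    IsBoundedUnder.isCoboundedUnder_ge
      (isBoundedUnder_of ⟨1, fun n => (X n).pr_le_one _⟩)
  have hfreq : ∃ᶠ n in atTop,
      (X n).pr {x | Real.logb K (1 / (X n).p x) > σ n} < ε + δ + γ/2 :=
    frequently_lt_of_liminf_lt hcob (lt_of_le_of_lt hH (by linarith))
  have hev1 : ∀ᶠ n in atTop, 1 ≤ σ' n - σ n := hdiff.eventually_ge_atTop 1
  have hrp : Tendsto (fun n => (K:ℝ) ^ (-(σ' n))) atTop (𝓝 0) :=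
    (tendsto_rpow_atBot_of_base_gt_one (K:ℝ) hK1).comp (tendsto_neg_atTop_atBot.comp hσ')
  have hev2 : ∀ᶠ n in atTop, (K:ℝ) ^ (-(σ' n)) < γ/2 :=
    hrp.eventually_lt_const (by linarith)
  have hfr2 : ∃ᶠ n in atTop,
      sInf ((fun A : Set (Fin n → 𝒳) =>
      (X n).pr (A ∩ {x | -Real.logb K ((X n).p x / (X n).pr A) ≥ σ' n})) ''
      {A | (X n).pr A ≥ 1 - ε - ν}) ≤ δ + γ := by
    refine ((hfreq.and_eventually (hev1.and hev2)).mono ?_)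
    rintro n ⟨hT, h1n, h2n⟩
    set Pn := X n with hPn
    set E : Set (Fin n → 𝒳) := {x | Real.logb K (1 / Pn.p x) ≥ σ' n} with hE
    set a : ℝ := (K:ℝ) ^ (-(σ' n)) with ha
    have ha0 : 0 ≤ a := (Real.rpow_pos_of_pos hK0 _).le
    have hatom : ∀ x ∈ E, Pn.p x ≤ a := by
      intro x hx
      rcases eq_or_lt_of_le (Pn.nonneg x) with h | h
      · rw [← h]; exact ha0
      · have h2 : (K:ℝ) ^ (σ' n) ≤ (K:ℝ) ^ (Real.logb K (1 / Pn.p x)) :=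
          (Real.rpow_le_rpow_left_iff hK1).2 hx
        rw [Real.rpow_logb (by positivity) (ne_of_gt hK1) (by positivity)] at h2
        have h3 : Pn.p x ≤ ((K:ℝ) ^ (σ' n))⁻¹ := by
          have h4 := inv_anti₀ (Real.rpow_pos_of_pos hK0 _) h2
          rwa [one_div, inv_inv] at h4
        rw [ha, Real.rpow_neg hK0.le]
        exact h3
    obtain ⟨C, hCE, hC1, hC2⟩ := greedy_set Pn E ha0 hatom (by linarith : (0:ℝ) ≤ ε + ν)
    set A : Set (Fin n → 𝒳) := Cᶜ with hA
    have hApr : Pn.pr A ≥ 1 - ε - ν := by rw [hA, Pn.pr_compl]; linarith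
    have hEv : Pn.pr (A ∩ {x | -Real.logb K (Pn.p x / Pn.pr A) ≥ σ' n}) ≤ δ + γ := by
      set Ev : Set (Fin n → 𝒳) := {x | -Real.logb K (Pn.p x / Pn.pr A) ≥ σ' n} with hEvdef
      have hincl : ∀ x, Pn.p x ≠ 0 → x ∈ A ∩ Ev → x ∈ E \ C := by
        rintro x hpx ⟨hxA, hxEv⟩
        have hp0 : 0 < Pn.p x := lt_of_le_of_ne (Pn.nonneg x) (Ne.symm hpx)
        have hprA : 0 < Pn.pr A := lt_of_lt_of_le hp0 (Pn.le_pr hxA)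
        have hlogdiv : Real.logb K (Pn.p x / Pn.pr A)
            = Real.logb K (Pn.p x) - Real.logb K (Pn.pr A) :=
          Real.logb_div hpx (ne_of_gt hprA)
        have hlognonpos : Real.logb K (Pn.pr A) ≤ 0 :=
          Real.logb_nonpos hK1 (Pn.pr_nonneg A) (Pn.pr_le_one A)
        have hxEv' : σ' n ≤ -Real.logb K (Pn.p x / Pn.pr A) := hxEv
        have hinvlog : Real.logb K (1 / Pn.p x) = - Real.logb K (Pn.p x) := by
          rw [one_div, Real.logb_inv]
        refine ⟨?_, hxA⟩
        show Real.logb K (1 / Pn.p x) ≥ σ' n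
        rw [hinvlog]
        rw [hlogdiv] at hxEv'
        linarith
      have heq : Pn.pr (A ∩ Ev) = Pn.pr ((A ∩ Ev) ∩ (E \ C)) := by
        apply Pn.pr_congr_supp
        intro x hpx
        exact ⟨fun hx => ⟨hx, hincl x hpx hx⟩, fun hx => hx.1⟩
      rw [heq]
      have hle : Pn.pr ((A ∩ Ev) ∩ (E \ C)) ≤ Pn.pr (E \ C) :=
        Pn.pr_mono Set.inter_subset_right
      have hdiffpr : Pn.pr (E \ C) = Pn.pr E - Pn.pr C := Pn.pr_diff hCE
      have hET : Pn.pr E ≤ Pn.pr {x | Real.logb K (1 / Pn.p x) > σ n} := by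
        apply Pn.pr_mono
        intro x hx
        have h5 : Real.logb K (1 / Pn.p x) ≥ σ' n := hx
        show Real.logb K (1 / Pn.p x) > σ n
        linarith
      rcases hC2 with h | h
      · have hprE : Pn.pr E < ε + δ + γ/2 := lt_of_le_of_lt hET hT
        rw [hdiffpr] at hle
        linarith
      · have hz : Pn.pr (E \ C) = 0 := by rw [h, Set.diff_self]; exact Pn.pr_empty
        rw [hz] at hle
        linarith
    calc sInf ((fun A : Set (Fin n → 𝒳) =>
          Pn.pr (A ∩ {x | -Real.logb K (Pn.p x / Pn.pr A) ≥ σ' n})) ''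
          {A | Pn.pr A ≥ 1 - ε - ν})
        ≤ Pn.pr (A ∩ {x | -Real.logb K (Pn.p x / Pn.pr A) ≥ σ' n}) :=
          csInf_le (bddBelow_pr_image Pn _ _) (Set.mem_image_of_mem _ hApr)
      _ ≤ δ + γ := hEv
  refine liminf_le_of_frequently_le hfr2 (isBoundedUnder_of ⟨0, fun n => ?_⟩)
  exact sInf_pr_nonneg (X n) _ _

end Direct
section Converse
open Topology

lemma converse_lemma {𝒳 : Type*} {K : ℕ} (hK : 2 ≤ K) (X : Source 𝒳) {ε δ : ℝ}
    (hε0 : 0 ≤ ε) {σ σ' : ℕ → ℝ}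
    (hdiff : Tendsto (fun n => σ' n - σ n) atTop atTop)
    {ν : ℝ} (hν : 0 < ν) (hν1 : ε + ν < 1)
    (hG : liminf (fun n => sInf ((fun A : Set (Fin n → 𝒳) =>
      (X n).pr (A ∩ {x | -Real.logb K ((X n).p x / (X n).pr A) ≥ σ n})) ''
      {A | (X n).pr A ≥ 1 - ε - ν})) atTop ≤ δ) :
    liminf (fun n => (X n).pr {x | Real.logb K (1 / (X n).p x) > σ' n}) atTop
      ≤ ε + δ + ν := by
  have hK1 : (1:ℝ) < K := by exact_mod_cast hK
  set c : ℝ := -Real.logb K (1 - ε - ν) with hc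
  have hev : ∀ᶠ n in atTop, c ≤ σ' n - σ n := hdiff.eventually_ge_atTop c
  have key : ∀ᶠ n in atTop,
      (X n).pr {x | Real.logb K (1 / (X n).p x) > σ' n} - (ε + ν) ≤
      sInf ((fun A : Set (Fin n → 𝒳) =>
        (X n).pr (A ∩ {x | -Real.logb K ((X n).p x / (X n).pr A) ≥ σ n})) ''
        {A | (X n).pr A ≥ 1 - ε - ν}) := by
    filter_upwards [hev] with n hn
    set Pn := X n with hPn
    set T : Set (Fin n → 𝒳) := {x | Real.logb K (1 / Pn.p x) > σ' n} with hT
    refine le_csInf ⟨_, Set.mem_image_of_mem _ (univ_mem_con Pn hε0 hν.le)⟩ ?_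
    rintro b ⟨A, hA, rfl⟩
    have hA' : Pn.pr A ≥ 1 - ε - ν := hA
    have hAc : Pn.pr Aᶜ ≤ ε + ν := by rw [Pn.pr_compl]; linarith
    have h1 : Pn.pr T - Pn.pr Aᶜ ≤ Pn.pr (T ∩ A) := Pn.pr_inter_ge T A
    set Ev : Set (Fin n → 𝒳) := {x | -Real.logb K (Pn.p x / Pn.pr A) ≥ σ n} with hEv
    have hincl : ∀ x, Pn.p x ≠ 0 → x ∈ T ∩ A → x ∈ A ∩ Ev := by
      rintro x hpx ⟨hxT, hxA⟩
      have hp0 : 0 < Pn.p x := lt_of_le_of_ne (Pn.nonneg x) (Ne.symm hpx)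
      have hprA : 0 < Pn.pr A := by linarith
      have hlogdiv : Real.logb K (Pn.p x / Pn.pr A)
          = Real.logb K (Pn.p x) - Real.logb K (Pn.pr A) :=
        Real.logb_div hpx (ne_of_gt hprA)
      have hmono : Real.logb K (1 - ε - ν) ≤ Real.logb K (Pn.pr A) :=
        Real.logb_le_logb_of_le hK1 (by linarith) hA'
      have hinvlog : Real.logb K (1 / Pn.p x) = - Real.logb K (Pn.p x) := by
        rw [one_div, Real.logb_inv]
      have hxT' : Real.logb K (1 / Pn.p x) > σ' n := hxT
      refine ⟨hxA, ?_⟩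
      show -Real.logb K (Pn.p x / Pn.pr A) ≥ σ n
      rw [hlogdiv]
      rw [hinvlog] at hxT'
      have : σ' n - c ≥ σ n := by linarith
      linarith
    have heq : Pn.pr (T ∩ A) = Pn.pr ((T ∩ A) ∩ (A ∩ Ev)) := by
      apply Pn.pr_congr_supp
      intro x hpx
      exact ⟨fun hx => ⟨hx, hincl x hpx hx⟩, fun hx => hx.1⟩
    have h2 : Pn.pr (T ∩ A) ≤ Pn.pr (A ∩ Ev) := by
      rw [heq]; exact Pn.pr_mono Set.inter_subset_right
    linarith
  have hbdd : IsBoundedUnder (· ≥ ·) atTop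
      (fun n => (X n).pr {x | Real.logb K (1 / (X n).p x) > σ' n} - (ε + ν)) :=
    isBoundedUnder_of ⟨-(ε + ν), fun n => by
      have := (X n).pr_nonneg {x | Real.logb K (1 / (X n).p x) > σ' n}; linarith⟩
  have hcob : IsCoboundedUnder (· ≥ ·) atTop
      (fun n => sInf ((fun A : Set (Fin n → 𝒳) =>
        (X n).pr (A ∩ {x | -Real.logb K ((X n).p x / (X n).pr A) ≥ σ n})) ''
        {A | (X n).pr A ≥ 1 - ε - ν})) :=
    IsBoundedUnder.isCoboundedUnder_ge (isBoundedUnder_of ⟨1, fun n =>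
      sInf_pr_le_one (X n) _ _ (univ_mem_con (X n) hε0 hν.le)⟩)
  have hlim : liminf (fun n =>
      (X n).pr {x | Real.logb K (1 / (X n).p x) > σ' n} - (ε + ν)) atTop ≤ δ :=
    le_trans (liminf_le_liminf key hbdd hcob) hG
  have haddc : liminf (fun n =>
      (X n).pr {x | Real.logb K (1 / (X n).p x) > σ' n} + (-(ε + ν))) atTop =
      liminf (fun n => (X n).pr {x | Real.logb K (1 / (X n).p x) > σ' n}) atTop + (-(ε + ν)) := by
    refine liminf_add_const atTop _ _ ?_ ?_
    · exact IsBoundedUnder.isCoboundedUnder_ge (isBoundedUnder_of ⟨1, fun n => (X n).pr_le_one _⟩)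
    · exact isBoundedUnder_of ⟨0, fun n => (X n).pr_nonneg _⟩
  simp only [sub_eq_add_neg] at hlim
  rw [haddc] at hlim
  linarith

end Converse
section Conversions
open Topology

variable {𝒳 : Type*}

lemma H_conv (K : ℕ) (X : Source 𝒳) (τ : ℕ → ℝ) :
    liminf (fun n => (X n).pr {x | Real.logb K (1 / (X n).p x) / (n:ℝ) > τ n}) atTop =
    liminf (fun n => (X n).pr {x | Real.logb K (1 / (X n).p x) > τ n * (n:ℝ)}) atTop := by
  apply liminf_congr
  filter_upwards [eventually_gt_atTop 0] with n hn
  congr 1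
  ext x
  simp only [Set.mem_setOf_eq, gt_iff_lt]
  rw [lt_div_iff₀ (by exact_mod_cast hn)]

lemma H_eqseq (K : ℕ) (X : Source 𝒳) {τ1 τ2 : ℕ → ℝ}
    (h : ∀ᶠ n in atTop, τ1 n = τ2 n) :
    liminf (fun n => (X n).pr {x | Real.logb K (1 / (X n).p x) > τ1 n}) atTop =
    liminf (fun n => (X n).pr {x | Real.logb K (1 / (X n).p x) > τ2 n}) atTop := by
  apply liminf_congr
  filter_upwards [h] with n hn
  rw [hn]

lemma G_conv (K : ℕ) (X : Source 𝒳) (ε ν : ℝ) (τ : ℕ → ℝ) :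
    liminf (fun n => sInf ((fun A : Set (Fin n → 𝒳) =>
      (X n).pr (A ∩ {x | -Real.logb K ((X n).p x / (X n).pr A) / (n:ℝ) ≥ τ n})) ''
      {A | (X n).pr A ≥ 1 - ε - ν})) atTop =
    liminf (fun n => sInf ((fun A : Set (Fin n → 𝒳) =>
      (X n).pr (A ∩ {x | -Real.logb K ((X n).p x / (X n).pr A) ≥ τ n * (n:ℝ)})) ''
      {A | (X n).pr A ≥ 1 - ε - ν})) atTop := by
  apply liminf_congr
  filter_upwards [eventually_gt_atTop 0] with n hn
  congr 1
  have : (fun A : Set (Fin n → 𝒳) =>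
      (X n).pr (A ∩ {x | -Real.logb K ((X n).p x / (X n).pr A) / (n:ℝ) ≥ τ n})) =
      (fun A : Set (Fin n → 𝒳) =>
      (X n).pr (A ∩ {x | -Real.logb K ((X n).p x / (X n).pr A) ≥ τ n * (n:ℝ)})) := by
    funext A
    congr 1
    congr 1
    ext x
    simp only [Set.mem_setOf_eq, ge_iff_le]
    rw [le_div_iff₀ (by exact_mod_cast hn : (0:ℝ) < (n:ℝ))]
  rw [this]

lemma G_eqseq (K : ℕ) (X : Source 𝒳) (ε ν : ℝ) {τ1 τ2 : ℕ → ℝ}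
    (h : ∀ᶠ n in atTop, τ1 n = τ2 n) :
    liminf (fun n => sInf ((fun A : Set (Fin n → 𝒳) =>
      (X n).pr (A ∩ {x | -Real.logb K ((X n).p x / (X n).pr A) ≥ τ1 n})) ''
      {A | (X n).pr A ≥ 1 - ε - ν})) atTop =
    liminf (fun n => sInf ((fun A : Set (Fin n → 𝒳) =>
      (X n).pr (A ∩ {x | -Real.logb K ((X n).p x / (X n).pr A) ≥ τ2 n})) ''
      {A | (X n).pr A ≥ 1 - ε - ν})) atTop := by
  apply liminf_congr
  filter_upwards [h] with n hn
  rw [hn]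

lemma sqrt_alg (R L : ℝ) : ∀ᶠ n : ℕ in atTop, (R + L / Real.sqrt (n:ℝ)) * (n:ℝ)
    = R * (n:ℝ) + L * Real.sqrt (n:ℝ) := by
  filter_upwards [eventually_ge_atTop 1] with n hn
  have hn0 : (0:ℝ) < (n:ℝ) := by exact_mod_cast Nat.lt_of_lt_of_le Nat.zero_lt_one hn
  have hs : (0:ℝ) < Real.sqrt (n:ℝ) := Real.sqrt_pos.mpr hn0
  have hss : Real.sqrt (n:ℝ) * Real.sqrt (n:ℝ) = (n:ℝ) := Real.mul_self_sqrt hn0.le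
  field_simp
  linear_combination (-L) * hss

lemma tendsto_const_mul_nat {R : ℝ} (hR : 0 < R) :
    Tendsto (fun n : ℕ => R * (n:ℝ)) atTop atTop :=
  tendsto_natCast_atTop_atTop.const_mul_atTop hR

lemma tendsto_L_sqrt {L : ℝ} (hL : 0 < L) :
    Tendsto (fun n : ℕ => L * Real.sqrt (n:ℝ)) atTop atTop :=
  tendsto_sqrt_nat.const_mul_atTop hL

lemma tendsto_Rn_sqrt {R : ℝ} (L : ℝ) (hR : 0 < R) :
    Tendsto (fun n : ℕ => R * (n:ℝ) + L * Real.sqrt (n:ℝ)) atTop atTop := by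
  have h1 : Tendsto (fun n : ℕ => Real.sqrt (n:ℝ) * (R * Real.sqrt (n:ℝ) + L)) atTop atTop :=
    tendsto_sqrt_nat.atTop_mul_atTop₀
      (tendsto_atTop_add_const_right _ L (tendsto_sqrt_nat.const_mul_atTop hR))
  refine h1.congr fun n => ?_
  have hss : Real.sqrt (n:ℝ) * Real.sqrt (n:ℝ) = (n:ℝ) := Real.mul_self_sqrt (Nat.cast_nonneg n)
  linear_combination R * hss

lemma tendsto_Rn_sqrt' {R L : ℝ} (hR : 0 ≤ R) (h : 0 < R ∨ 0 < L) :
    Tendsto (fun n : ℕ => R * (n:ℝ) + L * Real.sqrt (n:ℝ)) atTop atTop := by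
  rcases h with h | h
  · exact tendsto_Rn_sqrt L h
  · rcases eq_or_lt_of_le hR with hR0 | hR0
    · refine (tendsto_L_sqrt h).congr fun n => ?_
      rw [← hR0]
      ring
    · exact tendsto_Rn_sqrt L hR0

lemma liminf_one_of_neg {K : ℕ} (hK : 2 ≤ K) (X : Source 𝒳) {τ : ℕ → ℝ}
    (hτ : ∀ᶠ n in atTop, τ n < 0) :
    liminf (fun n => (X n).pr {x | Real.logb K (1 / (X n).p x) / (n:ℝ) > τ n}) atTop = 1 := by
  have h1 : ∀ᶠ n in atTop,
      (X n).pr {x | Real.logb K (1 / (X n).p x) / (n:ℝ) > τ n} = (1:ℝ) := by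
    filter_upwards [hτ] with n hn
    have h2 : {x | Real.logb K (1 / (X n).p x) / (n:ℝ) > τ n} = (Set.univ : Set (Fin n → 𝒳)) :=
      Set.eq_univ_of_forall fun x => lt_of_lt_of_le hn
        (div_nonneg (logb_one_div_nonneg hK (X n) x) (Nat.cast_nonneg n))
    rw [h2, (X n).pr_univ]
  rw [liminf_congr h1]
  exact liminf_const 1

lemma limNu_le_iff {g : ℝ → ℝ} {δ : ℝ} (hδ : 0 ≤ δ) (hb : ∀ ν > (0:ℝ), g ν ≤ 1) :
    limNu g ≤ δ ↔ ∀ ν > (0:ℝ), g ν ≤ δ := by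
  constructor
  · intro h ν hν
    refine le_trans (le_csSup ⟨1, ?_⟩ (Set.mem_image_of_mem g hν)) h
    rintro y ⟨ν', hν', rfl⟩
    exact hb ν' hν'
  · intro h
    apply Real.sSup_le _ hδ
    rintro y ⟨ν', hν', rfl⟩
    exact h ν' hν'

lemma G_inner_le_one (X : Source 𝒳) {ε ν : ℝ} (hε0 : 0 ≤ ε) (hν : 0 ≤ ν)
    (F : ∀ n, Set (Fin n → 𝒳) → Set (Fin n → 𝒳)) :
    liminf (fun n => sInf ((fun A => (X n).pr (A ∩ F n A)) ''
      {A | (X n).pr A ≥ 1 - ε - ν})) atTop ≤ 1 := by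
  refine liminf_le_of_frequently_le
    ((Filter.Eventually.of_forall fun n => ?_).frequently)
    (isBoundedUnder_of ⟨0, fun n => sInf_pr_nonneg (X n) _ _⟩)
  exact sInf_pr_le_one (X n) _ _ (univ_mem_con (X n) hε0 hν)

end Conversions
section Claims
open Topology

variable {𝒳 : Type*}

lemma H_conv_const (K : ℕ) (X : Source 𝒳) (R : ℝ) :
    liminf (fun n => (X n).pr {x | Real.logb K (1 / (X n).p x) / (n:ℝ) > R}) atTop =
    liminf (fun n => (X n).pr {x | Real.logb K (1 / (X n).p x) > R * (n:ℝ)}) atTop :=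
  H_conv K X (fun _ => R)

lemma H_conv_sqrt (K : ℕ) (X : Source 𝒳) (R L : ℝ) :
    liminf (fun n => (X n).pr {x | Real.logb K (1 / (X n).p x) / (n:ℝ)
      > R + L / Real.sqrt (n:ℝ)}) atTop =
    liminf (fun n => (X n).pr {x | Real.logb K (1 / (X n).p x)
      > R * (n:ℝ) + L * Real.sqrt (n:ℝ)}) atTop :=
  (H_conv K X (fun n => R + L / Real.sqrt (n:ℝ))).trans (H_eqseq K X (sqrt_alg R L))

lemma G_conv_const (K : ℕ) (X : Source 𝒳) (ε ν : ℝ) (R : ℝ) :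
    liminf (fun n => sInf ((fun A : Set (Fin n → 𝒳) =>
      (X n).pr (A ∩ {x | -Real.logb K ((X n).p x / (X n).pr A) / (n:ℝ) ≥ R})) ''
      {A | (X n).pr A ≥ 1 - ε - ν})) atTop =
    liminf (fun n => sInf ((fun A : Set (Fin n → 𝒳) =>
      (X n).pr (A ∩ {x | -Real.logb K ((X n).p x / (X n).pr A) ≥ R * (n:ℝ)})) ''
      {A | (X n).pr A ≥ 1 - ε - ν})) atTop :=
  G_conv K X ε ν (fun _ => R)

lemma G_conv_sqrt (K : ℕ) (X : Source 𝒳) (ε ν : ℝ) (R L : ℝ) :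
    liminf (fun n => sInf ((fun A : Set (Fin n → 𝒳) =>
      (X n).pr (A ∩ {x | -Real.logb K ((X n).p x / (X n).pr A) / (n:ℝ)
        ≥ R + L / Real.sqrt (n:ℝ)})) ''
      {A | (X n).pr A ≥ 1 - ε - ν})) atTop =
    liminf (fun n => sInf ((fun A : Set (Fin n → 𝒳) =>
      (X n).pr (A ∩ {x | -Real.logb K ((X n).p x / (X n).pr A)
        ≥ R * (n:ℝ) + L * Real.sqrt (n:ℝ)})) ''
      {A | (X n).pr A ≥ 1 - ε - ν})) atTop :=
  (G_conv K X ε ν (fun n => R + L / Real.sqrt (n:ℝ))).trans (G_eqseq K X ε ν (sqrt_alg R L))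

lemma claimB1 {𝒳 : Type*} [Countable 𝒳] {K : ℕ} (hK : 2 ≤ K) (X : Source 𝒳) {ε δ : ℝ}
    (hε0 : 0 ≤ ε) (hδ0 : 0 ≤ δ) (hεδ : ε + δ < 1) {R : ℝ}
    (hR : liminf (fun n => (X n).pr {x | Real.logb K (1 / (X n).p x) / (n:ℝ) > R}) atTop
      ≤ ε + δ)
    {η : ℝ} (hη : 0 < η) :
    limNu (fun ν => liminf (fun n => sInf ((fun A : Set (Fin n → 𝒳) =>
      (X n).pr (A ∩ {x | -Real.logb K ((X n).p x / (X n).pr A) / (n:ℝ) ≥ R + η})) ''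
      {A | (X n).pr A ≥ 1 - ε - ν})) atTop) ≤ δ := by
  have hR0 : 0 ≤ R := by
    by_contra h
    push_neg at h
    have h1 := liminf_one_of_neg hK X (τ := fun _ => R)
      (Filter.Eventually.of_forall fun _ => h)
    rw [h1] at hR; linarith
  rw [limNu_le_iff hδ0 (fun ν hν => G_inner_le_one X hε0 hν.le
    (fun n A => {x | -Real.logb K ((X n).p x / (X n).pr A) / (n:ℝ) ≥ R + η}))]
  intro ν hν
  rw [G_conv_const K X ε ν (R + η)]
  rw [H_conv_const K X R] at hR
  refine direct_lemma hK X hε0 hδ0 ?_ ?_ hR hν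
  · exact (tendsto_const_mul_nat hη).congr fun n => by ring
  · exact tendsto_const_mul_nat (by linarith)

lemma claimA1 {𝒳 : Type*} [Countable 𝒳] {K : ℕ} (hK : 2 ≤ K) (X : Source 𝒳) {ε δ : ℝ}
    (hε0 : 0 ≤ ε) (hε1 : ε < 1) (hδ0 : 0 ≤ δ) {R : ℝ}
    (hG : limNu (fun ν => liminf (fun n => sInf ((fun A : Set (Fin n → 𝒳) =>
      (X n).pr (A ∩ {x | -Real.logb K ((X n).p x / (X n).pr A) / (n:ℝ) ≥ R})) ''
      {A | (X n).pr A ≥ 1 - ε - ν})) atTop) ≤ δ)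
    {η : ℝ} (hη : 0 < η) :
    liminf (fun n => (X n).pr {x | Real.logb K (1 / (X n).p x) / (n:ℝ) > R + η}) atTop
      ≤ ε + δ := by
  refine le_of_forall_pos_le_add fun γ hγ => ?_
  set ν := min γ ((1 - ε)/2) with hνdef
  have hν : 0 < ν := lt_min hγ (by linarith)
  have hν1 : ε + ν < 1 := by
    have h2 : ν ≤ (1-ε)/2 := min_le_right _ _
    linarith
  have hGν := (limNu_le_iff hδ0 (fun ν' hν' => G_inner_le_one X hε0 hν'.le
    (fun n A => {x | -Real.logb K ((X n).p x / (X n).pr A) / (n:ℝ) ≥ R}))).mp hG ν hν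
  rw [G_conv_const K X ε ν R] at hGν
  have hdiff : Tendsto (fun n : ℕ => (R + η) * (n:ℝ) - R * (n:ℝ)) atTop atTop :=
    (tendsto_const_mul_nat hη).congr fun n => by ring
  have hconv := converse_lemma hK X hε0
    (σ := fun n => R * (n:ℝ)) (σ' := fun n => (R + η) * (n:ℝ)) hdiff hν hν1 hGν
  rw [H_conv_const K X (R + η)]
  have hνγ : ν ≤ γ := min_le_left _ _
  linarith

lemma claimB2 {𝒳 : Type*} [Countable 𝒳] {K : ℕ} (hK : 2 ≤ K) (X : Source 𝒳) {ε δ R : ℝ}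
    (hε0 : 0 ≤ ε) (hδ0 : 0 ≤ δ) (hεδ : ε + δ < 1) (hRnn : 0 ≤ R) {L : ℝ}
    (hL : liminf (fun n => (X n).pr {x | Real.logb K (1 / (X n).p x) / (n:ℝ)
      > R + L / Real.sqrt (n:ℝ)}) atTop ≤ ε + δ)
    {η : ℝ} (hη : 0 < η) :
    limNu (fun ν => liminf (fun n => sInf ((fun A : Set (Fin n → 𝒳) =>
      (X n).pr (A ∩ {x | -Real.logb K ((X n).p x / (X n).pr A) / (n:ℝ)
        ≥ R + (L + η) / Real.sqrt (n:ℝ)})) ''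
      {A | (X n).pr A ≥ 1 - ε - ν})) atTop) ≤ δ := by
  have hpos : 0 < R ∨ 0 ≤ L := by
    by_contra h
    push_neg at h
    obtain ⟨h1, h2⟩ := h
    have hR0 : R = 0 := le_antisymm h1 hRnn
    have hev : ∀ᶠ n : ℕ in atTop, R + L / Real.sqrt (n:ℝ) < 0 := by
      filter_upwards [eventually_ge_atTop 1] with n hn
      have hn0 : (0:ℝ) < (n:ℝ) := by exact_mod_cast Nat.lt_of_lt_of_le Nat.zero_lt_one hn
      have hs : 0 < Real.sqrt (n:ℝ) := Real.sqrt_pos.mpr hn0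
      rw [hR0, zero_add]
      exact div_neg_of_neg_of_pos h2 hs
    have h1' := liminf_one_of_neg hK X hev
    rw [h1'] at hL; linarith
  rw [limNu_le_iff hδ0 (fun ν hν => G_inner_le_one X hε0 hν.le
    (fun n A => {x | -Real.logb K ((X n).p x / (X n).pr A) / (n:ℝ)
      ≥ R + (L + η) / Real.sqrt (n:ℝ)}))]
  intro ν hν
  rw [G_conv_sqrt K X ε ν R (L + η)]
  rw [H_conv_sqrt K X R L] at hL
  refine direct_lemma hK X hε0 hδ0 ?_ ?_ hL hν
  · exact (tendsto_L_sqrt hη).congr fun n => by ring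
  · refine tendsto_Rn_sqrt' hRnn ?_
    rcases hpos with h | h
    · exact Or.inl h
    · exact Or.inr (by linarith)

lemma claimA2 {𝒳 : Type*} [Countable 𝒳] {K : ℕ} (hK : 2 ≤ K) (X : Source 𝒳) {ε δ R : ℝ}
    (hε0 : 0 ≤ ε) (hε1 : ε < 1) (hδ0 : 0 ≤ δ) {L : ℝ}
    (hG : limNu (fun ν => liminf (fun n => sInf ((fun A : Set (Fin n → 𝒳) =>
      (X n).pr (A ∩ {x | -Real.logb K ((X n).p x / (X n).pr A) / (n:ℝ)
        ≥ R + L / Real.sqrt (n:ℝ)})) ''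
      {A | (X n).pr A ≥ 1 - ε - ν})) atTop) ≤ δ)
    {η : ℝ} (hη : 0 < η) :
    liminf (fun n => (X n).pr {x | Real.logb K (1 / (X n).p x) / (n:ℝ)
      > R + (L + η) / Real.sqrt (n:ℝ)}) atTop ≤ ε + δ := by
  refine le_of_forall_pos_le_add fun γ hγ => ?_
  set ν := min γ ((1 - ε)/2) with hνdef
  have hν : 0 < ν := lt_min hγ (by linarith)
  have hν1 : ε + ν < 1 := by
    have h2 : ν ≤ (1-ε)/2 := min_le_right _ _
    linarith
  have hGν := (limNu_le_iff hδ0 (fun ν' hν' => G_inner_le_one X hε0 hν'.le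
    (fun n A => {x | -Real.logb K ((X n).p x / (X n).pr A) / (n:ℝ)
      ≥ R + L / Real.sqrt (n:ℝ)}))).mp hG ν hν
  rw [G_conv_sqrt K X ε ν R L] at hGν
  have hdiff : Tendsto (fun n : ℕ =>
      (R * (n:ℝ) + (L + η) * Real.sqrt (n:ℝ)) - (R * (n:ℝ) + L * Real.sqrt (n:ℝ)))
      atTop atTop :=
    (tendsto_L_sqrt hη).congr fun n => by ring
  have hconv := converse_lemma hK X hε0
    (σ := fun n => R * (n:ℝ) + L * Real.sqrt (n:ℝ))
    (σ' := fun n => R * (n:ℝ) + (L + η) * Real.sqrt (n:ℝ)) hdiff hν hν1 hGν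
  rw [H_conv_sqrt K X R (L + η)]
  have hνγ : ν ≤ γ := min_le_left _ _
  linarith

end Claims
/-- G*_{ε,δ}(X) = H̄*_{ε+δ}(X) and G*_{ε,δ}(R|X) = H̄*_{ε+δ}(R|X). -/
theorem statement16 {𝒳 : Type*} [Countable 𝒳] (K : ℕ) (hK : 2 ≤ K) (X : Source 𝒳)
    (R ε δ : ℝ) (hR : 0 ≤ R)
    (hε0 : 0 ≤ ε) (hε1 : ε < 1) (hδ0 : 0 ≤ δ) (hδ1 : δ < 1) (hεδ : ε + δ < 1) :
    GfirstStar K X ε δ = HbarStar K X (ε + δ) ∧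
    GsecondStar K X ε δ R = Hbar2Star K X (ε + δ) R := by
  constructor
  · show sInf _ = sInf _
    apply sInf_eq_sInf_of_cl
    · intro x hx η hη
      exact claimA1 hK X hε0 hε1 hδ0 hx hη
    · intro x hx η hη
      exact claimB1 hK X hε0 hδ0 hεδ hx hη
  · show sInf _ = sInf _
    apply sInf_eq_sInf_of_cl
    · intro x hx η hη
      exact claimA2 hK X hε0 hε1 hδ0 hx hη
    · intro x hx η hη
      exact claimB2 hK X hε0 hδ0 hεδ hR hx hη
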